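/- Let ι be a type, let ℓ : ι → ℝ be a family of reals with ℓ i ≥ c for all i, for some constant c > 0, let s > 0 be real, and suppose the family i ↦ exp(−s·ℓ i) is summable. Then the family (i,k) ∈ ι × ℕ ↦ 1 − exp(−(s+k)·ℓ i) is multipliable, each factor lies in (0,1), and the product ∏_{(i,k)} (1 − e^{−(s+k)ℓ_i}) is strictly positive. -/

import Mathlib

open Real

/-- Convergence of the Selberg zeta product: if the lengths `ℓ i` are bounded below by `c > 0`
and `i ↦ e^{-s ℓ i}` is summable, then the family `(i,k) ↦ 1 - e^{-(s+k) ℓ i}` is multipliable,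
each factor lies in `(0,1)`, and the product is strictly positive. -/
theorem stmt1 {ι : Type*} (ℓ : ι → ℝ) (c : ℝ) (hc : 0 < c) (hℓ : ∀ i, c ≤ ℓ i)
    (s : ℝ) (hs : 0 < s) (hsum : Summable fun i => Real.exp (-s * ℓ i)) :
    Multipliable (fun p : ι × ℕ => 1 - Real.exp (-(s + p.2) * ℓ p.1)) ∧
    (∀ p : ι × ℕ, 1 - Real.exp (-(s + p.2) * ℓ p.1) ∈ Set.Ioo (0 : ℝ) 1) ∧
    0 < ∏' p : ι × ℕ, (1 - Real.exp (-(s + p.2) * ℓ p.1)) := by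
  set a : ι × ℕ → ℝ := fun p => Real.exp (-(s + p.2) * ℓ p.1) with ha
  have hℓpos : ∀ i, 0 < ℓ i := fun i => hc.trans_le (hℓ i)
  have ha_pos : ∀ p, 0 < a p := fun p => Real.exp_pos _
  -- upper bound a p ≤ exp (-s*c) < 1
  have hM : Real.exp (-s * c) < 1 := by
    rw [Real.exp_lt_one_iff]
    nlinarith
  have ha_le : ∀ p : ι × ℕ, a p ≤ Real.exp (-s * c) := by
    intro ⟨i, k⟩
    apply Real.exp_le_exp.mpr
    have h1 : s ≤ s + k := le_add_of_nonneg_right (Nat.cast_nonneg k)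
    have := hℓ i
    nlinarith [hℓpos i]
  have ha_lt1 : ∀ p, a p < 1 := fun p => (ha_le p).trans_lt hM
  have hmem : ∀ p : ι × ℕ, 1 - a p ∈ Set.Ioo (0 : ℝ) 1 := by
    intro p
    constructor
    · linarith [ha_lt1 p]
    · linarith [ha_pos p]
  -- summability of a
  have hsa : Summable a := by
    apply Summable.of_nonneg_of_le (fun p => (ha_pos p).le)
      (f := fun p : ι × ℕ => Real.exp (-s * ℓ p.1) * Real.exp (-c) ^ p.2)
    · intro ⟨i, k⟩
      simp only [ha]
      rw [← Real.exp_nat_mul, ← Real.exp_add]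
      apply Real.exp_le_exp.mpr
      have := hℓ i
      have hk : (k : ℝ) * (-ℓ i) ≤ (k : ℝ) * (-c) := by
        apply mul_le_mul_of_nonneg_left (by linarith) (Nat.cast_nonneg k)
      nlinarith
    · exact hsum.mul_of_nonneg
        (summable_geometric_of_lt_one (Real.exp_pos _).le
          (Real.exp_lt_one_iff.mpr (by linarith)))
        (fun i => (Real.exp_pos _).le) (fun k => pow_nonneg (Real.exp_pos _).le k)
  -- summability of log (1 - a p)
  have hlog : Summable fun p => Real.log (1 - a p) := by
    rw [← summable_neg_iff]
    refine Summable.of_nonneg_of_le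
      (f := fun p => (1 - Real.exp (-s * c))⁻¹ * a p)
      (fun p => by
        rw [neg_nonneg]
        exact Real.log_nonpos (hmem p).1.le (by linarith [ha_pos p]))
      ?_ (hsa.mul_left _)
    intro p
    have h1 : 0 < 1 - a p := (hmem p).1
    have h2 : -Real.log (1 - a p) = Real.log (1 - a p)⁻¹ := by
      rw [Real.log_inv]
    rw [h2]
    have h3 : Real.log (1 - a p)⁻¹ ≤ (1 - a p)⁻¹ - 1 :=
      Real.log_le_sub_one_of_pos (by positivity)
    have h4 : (1 - a p)⁻¹ - 1 = a p / (1 - a p) := by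
      field_simp
      ring
    have h5 : a p / (1 - a p) ≤ (1 - Real.exp (-s * c))⁻¹ * a p := by
      rw [div_le_iff₀ h1]
      rw [mul_comm, ← mul_assoc]
      have hMpos : (0:ℝ) < 1 - Real.exp (-s * c) := by linarith
      have h6 : (1 : ℝ) ≤ (1 - Real.exp (-s * c))⁻¹ * (1 - a p) :=
        calc (1:ℝ) = (1 - Real.exp (-s * c))⁻¹ * (1 - Real.exp (-s * c)) :=
              (inv_mul_cancel₀ hMpos.ne').symm
          _ ≤ (1 - Real.exp (-s * c))⁻¹ * (1 - a p) :=
              mul_le_mul_of_nonneg_left (by linarith [ha_le p]) (inv_nonneg.mpr hMpos.le)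
      nlinarith [ha_pos p]
    linarith
  -- conclude
  have hmul : Multipliable fun p : ι × ℕ => 1 - a p := by
    exact Real.multipliable_of_summable_log (f := fun p => 1 - a p)
      (fun p => (hmem p).1) hlog
  refine ⟨hmul, hmem, ?_⟩
  have := Real.rexp_tsum_eq_tprod (f := fun p => 1 - a p)
    (fun p => (hmem p).1) hlog
  have h7 : Real.exp (∑' p : ι × ℕ, Real.log (1 - a p)) = ∏' p : ι × ℕ, (1 - a p) :=
    this
  rw [← h7]
  exact Real.exp_pos _
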